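/- For a division ring D, the upper triangular matrix ring T_3(D) is a VNL ring. -/

import Mathlib

/-- An element `a` of a ring is (von Neumann) regular if `a = a * x * a` for some `x`. -/
def IsVNRegular {R : Type*} [Ring R] (a : R) : Prop := ∃ x : R, a = a * x * a

/-- A ring is VNL if for every `a`, either `a` or `1 - a` is regular. -/
def IsVNLRing (R : Type*) [Ring R] : Prop :=
  ∀ a : R, IsVNRegular a ∨ IsVNRegular (1 - a)

/-- The ring of upper triangular `n × n` matrices over `R`, as a subring of `Mₙ(R)`. -/
def upperTriangularSubring (n : ℕ) (R : Type*) [Ring R] :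
    Subring (Matrix (Fin n) (Fin n) R) where
  carrier := {M | ∀ i j, j < i → M i j = 0}
  zero_mem' := fun _ _ _ => rfl
  one_mem' := fun _ _ h => Matrix.one_apply_ne h.ne'
  add_mem' := fun ha hb i j h => by
    simp [Matrix.add_apply, ha i j h, hb i j h]
  neg_mem' := fun ha i j h => by simp [Matrix.neg_apply, ha i j h]
  mul_mem' := fun {A B} ha hb i j h => by
    rw [Matrix.mul_apply]
    refine Finset.sum_eq_zero fun k _ => ?_
    rcases lt_or_ge k i with hk | hk
    · rw [ha i k hk, zero_mul]
    · rw [hb k j (lt_of_lt_of_le h hk), mul_zero]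

/-- Key computation: an upper triangular `3 × 3` matrix over a division ring whose
diagonal has "at most one zero" (in the weak sense below) is von Neumann regular,
with an upper triangular pseudo-inverse. -/
lemma reg_of_good {D : Type*} [DivisionRing D] (M : Matrix (Fin 3) (Fin 3) D)
    (hM : ∀ i j : Fin 3, j < i → M i j = 0)
    (h1 : M 0 0 = 0 → M 1 1 ≠ 0 ∧ M 2 2 ≠ 0)
    (h2 : M 1 1 = 0 → M 2 2 ≠ 0) :
    ∃ X : Matrix (Fin 3) (Fin 3) D, (∀ i j : Fin 3, j < i → X i j = 0) ∧ M = M * X * M := by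
  set p := M 0 0 with hp'
  set q := M 1 1 with hq'
  set r := M 2 2 with hr'
  set b := M 0 1 with hb'
  set c := M 0 2 with hc'
  set e := M 1 2 with he'
  refine ⟨!![p⁻¹, -(p⁻¹*b*q⁻¹), p⁻¹*b*q⁻¹*e*r⁻¹ - p⁻¹*c*r⁻¹; 0, q⁻¹, -(q⁻¹*e*r⁻¹); 0, 0, r⁻¹],
    ?_, ?_⟩
  · intro i j h
    fin_cases i <;> fin_cases j <;> first | rfl | (exfalso; exact absurd h (by decide))
  · have m10 : M 1 0 = 0 := hM 1 0 (by decide)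
    have m20 : M 2 0 = 0 := hM 2 0 (by decide)
    have m21 : M 2 1 = 0 := hM 2 1 (by decide)
    ext i j
    fin_cases i <;> fin_cases j <;>
      simp [Matrix.mul_apply, Fin.sum_univ_three, m10, m20, m21,
        ← hp', ← hq', ← hr', ← hb', ← hc', ← he']
    all_goals
      rcases eq_or_ne p 0 with hp0 | hp0 <;> rcases eq_or_ne q 0 with hq0 | hq0 <;>
        rcases eq_or_ne r 0 with hr0 | hr0 <;>
      first
        | exact absurd hq0 (h1 hp0).1
        | exact absurd hr0 (h1 hp0).2
        | exact absurd hr0 (h2 hq0)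
        | simp [hp0, hq0, hr0, mul_inv_cancel₀, inv_mul_cancel₀, inv_mul_cancel_right₀,
            mul_inv_cancel_right₀, mul_assoc, mul_sub, sub_mul, add_mul, neg_mul,
            sub_eq_add_neg, mul_add, mul_neg, mul_inv_cancel_left₀]

/-- An element of `T₃(D)` whose diagonal has at most one zero (weak form) is regular. -/
lemma regular_of_good {D : Type*} [DivisionRing D] (a : upperTriangularSubring 3 D)
    (h1 : (a : Matrix (Fin 3) (Fin 3) D) 0 0 = 0 →
      (a : Matrix (Fin 3) (Fin 3) D) 1 1 ≠ 0 ∧ (a : Matrix (Fin 3) (Fin 3) D) 2 2 ≠ 0)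
    (h2 : (a : Matrix (Fin 3) (Fin 3) D) 1 1 = 0 →
      (a : Matrix (Fin 3) (Fin 3) D) 2 2 ≠ 0) :
    IsVNRegular a := by
  obtain ⟨X, hXt, hX⟩ := reg_of_good (a : Matrix (Fin 3) (Fin 3) D) a.2 h1 h2
  exact ⟨⟨X, hXt⟩, Subtype.ext hX⟩

/-- For a division ring `D`, the upper triangular matrix ring `T₃(D)` is VNL. -/
theorem upperTriangular_three_isVNL (D : Type*) [DivisionRing D] :
    IsVNLRing (upperTriangularSubring 3 D) := by
  intro a
  have hdiag : ∀ i : Fin 3,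
      ((1 - a : upperTriangularSubring 3 D) : Matrix (Fin 3) (Fin 3) D) i i
        = 1 - (a : Matrix (Fin 3) (Fin 3) D) i i := by
    intro i
    simp [Matrix.sub_apply, Matrix.one_apply_eq]
  by_cases hp : (a : Matrix (Fin 3) (Fin 3) D) 0 0 = 0 <;>
    by_cases hq : (a : Matrix (Fin 3) (Fin 3) D) 1 1 = 0 <;>
    by_cases hr : (a : Matrix (Fin 3) (Fin 3) D) 2 2 = 0
  · exact Or.inr (regular_of_good _ (fun h => absurd h (by simp [hdiag 0, hp]))
      (fun h => absurd h (by simp [hdiag 1, hq])))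
  · exact Or.inr (regular_of_good _ (fun h => absurd h (by simp [hdiag 0, hp]))
      (fun h => absurd h (by simp [hdiag 1, hq])))
  · exact Or.inr (regular_of_good _ (fun h => absurd h (by simp [hdiag 0, hp]))
      (fun _ => by simp [hdiag 2, hr]))
  · exact Or.inl (regular_of_good _ (fun _ => ⟨hq, hr⟩) (fun h => absurd h hq))
  · exact Or.inr (regular_of_good _
      (fun _ => ⟨by simp [hdiag 1, hq], by simp [hdiag 2, hr]⟩)
      (fun h => absurd h (by simp [hdiag 1, hq])))
  · exact Or.inl (regular_of_good _ (fun h => absurd h hp) (fun _ => hr))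
  · exact Or.inl (regular_of_good _ (fun h => absurd h hp) (fun h => absurd h hq))
  · exact Or.inl (regular_of_good _ (fun h => absurd h hp) (fun h => absurd h hq))
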